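/- Let K be a nonzero real M×N matrix with singular values σ₁, ..., σ_Q (Q = min(M,N)), and define p_i = σ_i / Σ_j σ_j. The effective rank eRank(K) = exp(−Σ_i p_i log p_i) satisfies 1 ≤ eRank(K) ≤ rank(K), with eRank(K) = rank(K) if and only if all nonzero singular values of K are equal. -/

import Mathlib

open Matrix Finset

/-- The singular values of a real matrix `K`: square roots of the eigenvalues of `KᴴK`
(possibly padded with zeros, which do not affect the effective rank). -/
noncomputable def svals {M N : ℕ} (K : Matrix (Fin M) (Fin N) ℝ) : Fin N → ℝ :=
  fun i => Real.sqrt ((Matrix.isHermitian_conjTranspose_mul_self K).eigenvalues i)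

/-- The effective rank: the exponential of the Shannon entropy of the normalized
singular value distribution (with the convention `0 · log 0 = 0`, which holds
automatically since `Real.log 0 = 0`). -/
noncomputable def eRank {M N : ℕ} (K : Matrix (Fin M) (Fin N) ℝ) : ℝ :=
  Real.exp (-∑ i, (svals K i / ∑ j, svals K j) * Real.log (svals K i / ∑ j, svals K j))

/-- For a nonzero matrix `K`, `1 ≤ eRank(K) ≤ rank(K)`, with equality
`eRank(K) = rank(K)` iff all nonzero singular values of `K` are equal. -/
theorem eRank_between_one_and_rank {M N : ℕ}
    (K : Matrix (Fin M) (Fin N) ℝ) (hK : K ≠ 0) :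
    1 ≤ _root_.eRank K ∧ _root_.eRank K ≤ (K.rank : ℝ) ∧
      (_root_.eRank K = (K.rank : ℝ) ↔
        ∀ i j : Fin N, svals K i ≠ 0 → svals K j ≠ 0 → svals K i = svals K j) := by
  classical
  have he0 : ∀ i, 0 ≤ (Matrix.isHermitian_conjTranspose_mul_self K).eigenvalues i :=
    fun i => Matrix.eigenvalues_conjTranspose_mul_self_nonneg K i
  have hs0 : ∀ i, 0 ≤ svals K i := fun i => Real.sqrt_nonneg _
  have hsne : ∀ i, svals K i ≠ 0 ↔
      (Matrix.isHermitian_conjTranspose_mul_self K).eigenvalues i ≠ 0 := by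
    intro i
    unfold svals
    rw [ne_eq, ne_eq, Real.sqrt_eq_zero (he0 i)]
  set T : Finset (Fin N) := Finset.univ.filter (fun i => svals K i ≠ 0) with hT
  have hmemT : ∀ i, i ∈ T ↔ svals K i ≠ 0 := by intro i; simp [hT]
  -- rank = card T
  have hrank : K.rank = T.card := by
    rw [← Matrix.rank_conjTranspose_mul_self K,
      (Matrix.isHermitian_conjTranspose_mul_self K).rank_eq_card_non_zero_eigs,
      Fintype.card_subtype]
    congr 1
    apply Finset.filter_congr
    intro i _
    simp [hsne i]
  -- T nonempty
  have hev : (Matrix.isHermitian_conjTranspose_mul_self K).eigenvalues ≠ 0 := by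
    intro h0
    apply hK
    rw [← Matrix.conjTranspose_mul_self_eq_zero (A := K)]
    have hst := (Matrix.isHermitian_conjTranspose_mul_self K).spectral_theorem
    rw [h0] at hst
    have hz : Matrix.diagonal (RCLike.ofReal ∘ (0 : Fin N → ℝ)) = (0 : Matrix (Fin N) (Fin N) ℝ) := by
      ext i j
      simp [Matrix.diagonal]
    rw [hz] at hst
    simpa using hst
  have hTne : T.Nonempty := by
    obtain ⟨i, hi⟩ := Function.ne_iff.mp hev
    exact ⟨i, (hmemT i).mpr ((hsne i).mpr hi)⟩
  set S : ℝ := ∑ j, svals K j with hS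
  have hSpos : 0 < S := by
    obtain ⟨i0, hi0⟩ := hTne
    have : 0 < svals K i0 := lt_of_le_of_ne (hs0 i0) (Ne.symm ((hmemT i0).mp hi0))
    exact Finset.sum_pos' (fun i _ => hs0 i) ⟨i0, Finset.mem_univ i0, this⟩
  set p : Fin N → ℝ := fun i => svals K i / S with hp
  have hp0 : ∀ i, 0 ≤ p i := fun i => div_nonneg (hs0 i) hSpos.le
  have hppos : ∀ i ∈ T, 0 < p i := fun i hi =>
    div_pos (lt_of_le_of_ne (hs0 i) (Ne.symm ((hmemT i).mp hi))) hSpos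
  have hsumT : ∑ i ∈ T, svals K i = S := by
    rw [hS, hT]
    exact Finset.sum_filter_ne_zero _
  have hpsum : ∑ i ∈ T, p i = 1 := by
    rw [hp]
    rw [← Finset.sum_div, hsumT, div_self hSpos.ne']
  -- entropy sum restricts to T
  have hHsum : ∑ i, p i * Real.log (p i) = ∑ i ∈ T, p i * Real.log (p i) := by
    symm
    apply Finset.sum_subset (Finset.subset_univ T)
    intro i _ hi
    have : svals K i = 0 := by
      by_contra h
      exact hi ((hmemT i).mpr h)
    simp [hp, this]
  set H : ℝ := ∑ i ∈ T, p i * Real.log (p i) with hH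
  have heq : _root_.eRank K = Real.exp (-H) := by
    rw [_root_.eRank, hHsum]
  set r : ℕ := T.card with hr
  have hrpos : 0 < (r : ℝ) := by
    have := Finset.card_pos.mpr hTne
    exact_mod_cast this
  -- Part 1 : H ≤ 0
  have hHle : H ≤ 0 := by
    apply Finset.sum_nonpos
    intro i hi
    have hle1 : p i ≤ 1 := by
      rw [hp, div_le_one hSpos]
      exact Finset.single_le_sum (fun j _ => hs0 j) (Finset.mem_univ i)
    exact mul_nonpos_of_nonneg_of_nonpos (hp0 i) (Real.log_nonpos (hp0 i) hle1)
  have part1 : 1 ≤ _root_.eRank K := by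
    rw [heq]
    have h1 : Real.exp 0 ≤ Real.exp (-H) := Real.exp_le_exp.mpr (by linarith)
    simpa using h1
  -- key sum identity : ∑ p i * log(r * p i) = log r + H
  have hkey : ∑ i ∈ T, p i * Real.log ((r : ℝ) * p i) = Real.log (r : ℝ) + H := by
    have : ∀ i ∈ T, p i * Real.log ((r : ℝ) * p i)
        = p i * Real.log (r : ℝ) + p i * Real.log (p i) := by
      intro i hi
      rw [Real.log_mul hrpos.ne' (hppos i hi).ne', mul_add]
    rw [Finset.sum_congr rfl this, Finset.sum_add_distrib, ← Finset.sum_mul, hpsum, one_mul]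
  -- termwise bounds
  have hterm : ∀ i ∈ T, p i - 1 / (r : ℝ) ≤ p i * Real.log ((r : ℝ) * p i) := by
    intro i hi
    have hx : 0 < (r : ℝ) * p i := mul_pos hrpos (hppos i hi)
    have hlog : 1 - ((r : ℝ) * p i)⁻¹ ≤ Real.log ((r : ℝ) * p i) :=
      Real.one_sub_inv_le_log_of_pos hx
    have h2 : p i * (1 - ((r : ℝ) * p i)⁻¹) ≤ p i * Real.log ((r : ℝ) * p i) :=
      mul_le_mul_of_nonneg_left hlog (hp0 i)
    have h3 : p i * (1 - ((r : ℝ) * p i)⁻¹) = p i - 1 / (r : ℝ) := by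
      field_simp
      rw [mul_sub, mul_one_div_cancel (hppos i hi).ne']
    linarith [h2, h3 ▸ h2]
  have hstrict : ∀ i ∈ T, (r : ℝ) * p i ≠ 1 →
      p i - 1 / (r : ℝ) < p i * Real.log ((r : ℝ) * p i) := by
    intro i hi hne
    have hx : 0 < (r : ℝ) * p i := mul_pos hrpos (hppos i hi)
    have hlog : 1 - ((r : ℝ) * p i)⁻¹ < Real.log ((r : ℝ) * p i) := by
      have := Real.log_lt_sub_one_of_pos (inv_pos.mpr hx) (by
        intro h
        exact hne (by rw [← inv_inv ((r:ℝ) * p i), h, inv_one]))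
      rw [Real.log_inv] at this
      linarith
    have h2 : p i * (1 - ((r : ℝ) * p i)⁻¹) < p i * Real.log ((r : ℝ) * p i) :=
      mul_lt_mul_of_pos_left hlog (hppos i hi)
    have h3 : p i * (1 - ((r : ℝ) * p i)⁻¹) = p i - 1 / (r : ℝ) := by
      field_simp
      rw [mul_sub, mul_one_div_cancel (hppos i hi).ne']
    linarith [h3 ▸ h2]
  have hsumlb : ∑ i ∈ T, (p i - 1 / (r : ℝ)) = 0 := by
    rw [Finset.sum_sub_distrib, hpsum, Finset.sum_const, ← hr, nsmul_eq_mul]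
    field_simp
    norm_num
  have hub : 0 ≤ Real.log (r : ℝ) + H := by
    rw [← hkey]
    calc (0:ℝ) = ∑ i ∈ T, (p i - 1 / (r : ℝ)) := hsumlb.symm
    _ ≤ _ := Finset.sum_le_sum hterm
  have part2 : _root_.eRank K ≤ (K.rank : ℝ) := by
    rw [heq, hrank]
    have : -H ≤ Real.log (r : ℝ) := by linarith
    calc Real.exp (-H) ≤ Real.exp (Real.log (r : ℝ)) := Real.exp_le_exp.mpr this
    _ = (r : ℝ) := Real.exp_log hrpos
  refine ⟨part1, part2, ?_⟩
  -- equality case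
  have hiff1 : _root_.eRank K = (K.rank : ℝ) ↔ Real.log (r : ℝ) + H = 0 := by
    rw [heq, hrank]
    constructor
    · intro h
      have : Real.exp (-H) = Real.exp (Real.log (r : ℝ)) := by
        rw [h, Real.exp_log hrpos]
      have := Real.exp_injective this
      linarith
    · intro h
      have : -H = Real.log (r : ℝ) := by linarith
      rw [this, Real.exp_log hrpos]
  rw [hiff1]
  constructor
  · -- equality implies all nonzero svals equal
    intro h0 i j hi hj
    have hiT : i ∈ T := (hmemT i).mpr hi
    have hjT : j ∈ T := (hmemT j).mpr hj
    have hall : ∀ k ∈ T, (r : ℝ) * p k = 1 := by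
      intro k hk
      by_contra hne
      have hlt := hstrict k hk hne
      have : (0:ℝ) < Real.log (r : ℝ) + H := by
        rw [← hkey]
        calc (0:ℝ) = ∑ i ∈ T, (p i - 1 / (r : ℝ)) := hsumlb.symm
        _ < _ := Finset.sum_lt_sum hterm ⟨k, hk, hlt⟩
      linarith
    have hpi := hall i hiT
    have hpj := hall j hjT
    have : p i = p j := by
      have : (r : ℝ) * p i = (r : ℝ) * p j := by rw [hpi, hpj]
      exact mul_left_cancel₀ hrpos.ne' this
    have := congrArg (· * S) this
    simpa [hp, div_mul_cancel₀, hSpos.ne'] using this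
  · -- all nonzero svals equal implies equality
    intro hall
    obtain ⟨i0, hi0⟩ := hTne
    have hceq : ∀ k ∈ T, svals K k = svals K i0 := fun k hk =>
      hall k i0 ((hmemT k).mp hk) ((hmemT i0).mp hi0)
    have hSeq : S = (r : ℝ) * svals K i0 := by
      rw [← hsumT, Finset.sum_congr rfl hceq, Finset.sum_const, ← hr, nsmul_eq_mul]
    have hc0 : 0 < svals K i0 := lt_of_le_of_ne (hs0 i0) (Ne.symm ((hmemT i0).mp hi0))
    have hpval : ∀ k ∈ T, p k = 1 / (r : ℝ) := by
      intro k hk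
      show svals K k / S = 1 / (r : ℝ)
      rw [hceq k hk, hSeq, mul_comm, div_mul_eq_div_div, div_self hc0.ne']
    have hHval : H = -Real.log (r : ℝ) := by
      rw [hH]
      rw [Finset.sum_congr rfl (fun k hk => by rw [hpval k hk])]
      rw [Finset.sum_const, ← hr, nsmul_eq_mul]
      rw [one_div, Real.log_inv, ← mul_assoc, mul_inv_cancel₀ hrpos.ne', one_mul]
    rw [hHval]
    ring
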